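/- Let C be m×(n+d), Σ be (n+d)×(n+d) symmetric positive semidefinite, and X be (n+d)×d of rank d such that col(XᵀCᵀ) ⊆ col(XᵀΣ). Set Δ* = C X (XᵀΣX)⁺ Xᵀ Σ. Then (i) Δ*(I − P_Σ) = 0 and (C − Δ*)X = 0; (ii) Δ* Σ⁺ Δ*ᵀ = C X (XᵀΣX)⁺ Xᵀ Cᵀ; (iii) for every Δ satisfying Δ(I − P_Σ) = 0 and (C − Δ)X = 0, one has Δ Σ⁺ Δᵀ ≥ C X (XᵀΣX)⁺ Xᵀ Cᵀ in the Loewner order. -/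

import Mathlib

open Matrix

/-- P is the Moore–Penrose pseudoinverse of M (the four Penrose conditions). -/
def IsMoorePenrose {a b : ℕ} (M : Matrix (Fin a) (Fin b) ℝ) (P : Matrix (Fin b) (Fin a) ℝ) :
    Prop :=
  M * P * M = M ∧ P * M * P = P ∧ (M * P)ᵀ = M * P ∧ (P * M)ᵀ = P * M

/-- Column space of a matrix. -/
def colSpace {a b : ℕ} (M : Matrix (Fin a) (Fin b) ℝ) : Submodule ℝ (Fin a → ℝ) :=
  LinearMap.range M.mulVecLin

lemma mp_unique {a b : ℕ} {M : Matrix (Fin a) (Fin b) ℝ} {P Q : Matrix (Fin b) (Fin a) ℝ}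
    (hP : IsMoorePenrose M P) (hQ : IsMoorePenrose M Q) : P = Q := by
  obtain ⟨hP1, hP2, hP3, hP4⟩ := hP
  obtain ⟨hQ1, hQ2, hQ3, hQ4⟩ := hQ
  have h1 : M * P = M * Q := by
    calc M * P = (M * Q) * (M * P) := by rw [← Matrix.mul_assoc, hQ1]
    _ = (M * Q)ᵀ * (M * P)ᵀ := by rw [hQ3, hP3]
    _ = Qᵀ * (M * P * M)ᵀ := by simp [Matrix.transpose_mul, Matrix.mul_assoc]
    _ = Qᵀ * Mᵀ := by rw [hP1]
    _ = (M * Q)ᵀ := by rw [Matrix.transpose_mul]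
    _ = M * Q := hQ3
  have h2 : P * M = Q * M := by
    calc P * M = (P * M) * (Q * M) := by
          rw [Matrix.mul_assoc, ← Matrix.mul_assoc M, hQ1]
    _ = (P * M)ᵀ * (Q * M)ᵀ := by rw [hP4, hQ4]
    _ = (M * P * M)ᵀ * Qᵀ := by simp [Matrix.transpose_mul, Matrix.mul_assoc]
    _ = Mᵀ * Qᵀ := by rw [hP1]
    _ = (Q * M)ᵀ := by rw [Matrix.transpose_mul]
    _ = Q * M := hQ4
  calc P = P * M * P := hP2.symm
  _ = P * (M * Q) := by rw [Matrix.mul_assoc, h1]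
  _ = Q * M * Q := by rw [← Matrix.mul_assoc, h2]
  _ = Q := hQ2

lemma mp_transpose {a b : ℕ} {M : Matrix (Fin a) (Fin b) ℝ} {P : Matrix (Fin b) (Fin a) ℝ}
    (hP : IsMoorePenrose M P) : IsMoorePenrose Mᵀ Pᵀ := by
  obtain ⟨h1, h2, h3, h4⟩ := hP
  refine ⟨?_, ?_, ?_, ?_⟩
  · have := congrArg Matrix.transpose h1
    simpa [Matrix.transpose_mul, Matrix.mul_assoc] using this
  · have := congrArg Matrix.transpose h2
    simpa [Matrix.transpose_mul, Matrix.mul_assoc] using this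
  · rw [← Matrix.transpose_mul, Matrix.transpose_transpose, h4]
  · rw [← Matrix.transpose_mul, Matrix.transpose_transpose, h3]

lemma mp_symm {a : ℕ} {M P : Matrix (Fin a) (Fin a) ℝ} (hM : Mᵀ = M)
    (hP : IsMoorePenrose M P) : Pᵀ = P := by
  have h := mp_transpose hP
  rw [hM] at h
  exact mp_unique h hP

lemma colSpace_le_exists {a b c : ℕ} {A : Matrix (Fin a) (Fin b) ℝ}
    {B : Matrix (Fin a) (Fin c) ℝ} (h : colSpace A ≤ colSpace B) :
    ∃ W : Matrix (Fin c) (Fin b) ℝ, B * W = A := by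
  have hc : ∀ j : Fin b, ∃ w : Fin c → ℝ, B.mulVec w = fun i => A i j := by
    intro j
    have hmem : (fun i => A i j) ∈ colSpace A := by
      refine ⟨Pi.single j 1, ?_⟩
      ext i
      simp [Matrix.mulVecLin, Matrix.mulVec_single]
    exact h hmem
  refine ⟨Matrix.of fun i j => (hc j).choose i, ?_⟩
  ext i j
  have := congrFun (hc j).choose_spec i
  simpa [Matrix.mul_apply, Matrix.mulVec, dotProduct] using this

lemma psd_sqrt_exists {k : ℕ} {Sg : Matrix (Fin k) (Fin k) ℝ} (hSg : Sg.PosSemidef) :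
    ∃ S : Matrix (Fin k) (Fin k) ℝ, S * S = Sg ∧ Sᵀ = S := by
  open scoped MatrixOrder in
  exact ⟨CFC.sqrt Sg, CFC.sqrt_mul_sqrt_self Sg hSg.nonneg, by
    rw [← Matrix.conjTranspose_eq_transpose_of_trivial]; exact (CFC.sqrt_nonneg Sg).posSemidef.1⟩

/-- The least element of {Δ Σ⁺ Δᵀ : Δ(I − P_Σ) = 0, (C − Δ)X = 0} in the Loewner order:
with Δ* = C X (XᵀΣX)⁺ Xᵀ Σ one has (i) Δ* satisfies the constraints,
(ii) Δ* Σ⁺ Δ*ᵀ = C X (XᵀΣX)⁺ Xᵀ Cᵀ, and (iii) every feasible Δ satisfies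
Δ Σ⁺ Δᵀ ≥ C X (XᵀΣX)⁺ Xᵀ Cᵀ. -/
theorem tls_least_element {m n d : ℕ}
    (C : Matrix (Fin m) (Fin (n + d)) ℝ)
    (Sg : Matrix (Fin (n + d)) (Fin (n + d)) ℝ) (hSg : Sg.PosSemidef)
    (Sp : Matrix (Fin (n + d)) (Fin (n + d)) ℝ) (hSp : IsMoorePenrose Sg Sp)
    (X : Matrix (Fin (n + d)) (Fin d) ℝ) (hX : X.rank = d)
    (G : Matrix (Fin d) (Fin d) ℝ) (hG : IsMoorePenrose (Xᵀ * Sg * X) G)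
    (hcompat : colSpace (Xᵀ * Cᵀ) ≤ colSpace (Xᵀ * Sg)) :
    ((C * X * G * Xᵀ * Sg) * (1 - Sg * Sp) = 0 ∧ (C - C * X * G * Xᵀ * Sg) * X = 0) ∧
    (C * X * G * Xᵀ * Sg) * Sp * (C * X * G * Xᵀ * Sg)ᵀ = C * X * G * Xᵀ * Cᵀ ∧
    ∀ Δ : Matrix (Fin m) (Fin (n + d)) ℝ,
      Δ * (1 - Sg * Sp) = 0 → (C - Δ) * X = 0 →
        (Δ * Sp * Δᵀ - C * X * G * Xᵀ * Cᵀ).PosSemidef := by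
  have hSgT : Sgᵀ = Sg := by
    rw [← Matrix.conjTranspose_eq_transpose_of_trivial]; exact hSg.1
  set N : Matrix (Fin d) (Fin d) ℝ := Xᵀ * Sg * X with hNdef
  have hNT : Nᵀ = N := by
    simp [hNdef, Matrix.transpose_mul, hSgT, Matrix.mul_assoc]
  have hSpT : Spᵀ = Sp := mp_symm hSgT hSp
  have hGT : Gᵀ = G := mp_symm hNT hG
  have hcomm : Sp * Sg = Sg * Sp := by
    have h := hSp.2.2.2
    rw [Matrix.transpose_mul, hSpT, hSgT] at h
    exact h.symm
  -- the square root of Sg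
  obtain ⟨S, hSS, hST⟩ := psd_sqrt_exists hSg
  have e1 : (S * X)ᵀ * (S * X) = N := by
    simp [hNdef, Matrix.transpose_mul, hST, ← hSS, Matrix.mul_assoc]
  have hNGN : N * (G * N) = N := by rw [← Matrix.mul_assoc]; exact hG.1
  have hAB : (S * X)ᵀ * (S * X - S * X * (G * N)) = 0 := by
    rw [Matrix.mul_sub, e1, ← Matrix.mul_assoc ((S * X)ᵀ) (S * X) (G * N), e1, hNGN,
      sub_self]
  have hBB : (S * X - S * X * (G * N))ᵀ * (S * X - S * X * (G * N)) = 0 := by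
    rw [Matrix.transpose_sub, Matrix.sub_mul, hAB,
      Matrix.transpose_mul (S * X) (G * N),
      Matrix.mul_assoc ((G * N)ᵀ) ((S * X)ᵀ) _, hAB, Matrix.mul_zero, sub_zero]
  have hA0 : S * X = S * X * (G * N) := by
    have h0 : S * X - S * X * (G * N) = 0 := by
      apply Matrix.conjTranspose_mul_self_eq_zero.mp
      rw [Matrix.conjTranspose_eq_transpose_of_trivial]
      exact hBB
    exact (sub_eq_zero.mp h0)
  have hK : Sg * X * (G * N) = Sg * X := by
    calc Sg * X * (G * N) = S * (S * X * (G * N)) := by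
          rw [← hSS, Matrix.mul_assoc S S X, Matrix.mul_assoc S (S * X) (G * N)]
    _ = S * (S * X) := by rw [← hA0]
    _ = Sg * X := by rw [← Matrix.mul_assoc, hSS]
  obtain ⟨W, hW⟩ := colSpace_le_exists hcompat
  have hWt : Wᵀ * (Sg * X) = C * X := by
    have h := congrArg Matrix.transpose hW
    simpa [Matrix.transpose_mul, hSgT, Matrix.mul_assoc] using h
  have hCX : C * X * (G * N) = C * X := by
    calc C * X * (G * N) = Wᵀ * (Sg * X * (G * N)) := by
          rw [← hWt, Matrix.mul_assoc]
    _ = Wᵀ * (Sg * X) := by rw [hK]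
    _ = C * X := hWt
  have hSgSp0 : Sg * (1 - Sg * Sp) = 0 := by
    calc Sg * (1 - Sg * Sp) = Sg - Sg * (Sp * Sg) := by
          rw [Matrix.mul_sub, Matrix.mul_one, hcomm]
    _ = Sg - Sg * Sp * Sg := by rw [Matrix.mul_assoc]
    _ = 0 := by rw [hSp.1, sub_self]
  have part1a : (C * X * G * Xᵀ * Sg) * (1 - Sg * Sp) = 0 := by
    calc (C * X * G * Xᵀ * Sg) * (1 - Sg * Sp)
        = C * X * G * Xᵀ * (Sg * (1 - Sg * Sp)) := by rw [Matrix.mul_assoc]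
    _ = 0 := by rw [hSgSp0, Matrix.mul_zero]
  have part1b : (C - C * X * G * Xᵀ * Sg) * X = 0 := by
    rw [Matrix.sub_mul]
    have h : C * X * G * Xᵀ * Sg * X = C * X := by
      calc C * X * G * Xᵀ * Sg * X = C * X * (G * N) := by
            rw [hNdef]; simp only [Matrix.mul_assoc]
      _ = C * X := hCX
    rw [h, sub_self]
  have hcross : ∀ Δ : Matrix (Fin m) (Fin (n + d)) ℝ,
      Δ * (1 - Sg * Sp) = 0 → (C - Δ) * X = 0 →
      (C * X * G * Xᵀ * Sg) * Sp * Δᵀ = C * X * G * Xᵀ * Cᵀ := by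
    intro Δ hf1 hf2
    have hΔ : Δ * (Sg * Sp) = Δ := by
      rw [Matrix.mul_sub, Matrix.mul_one] at hf1
      exact (sub_eq_zero.mp hf1).symm
    have hΔX : Δ * X = C * X := by
      rw [Matrix.sub_mul] at hf2
      exact (sub_eq_zero.mp hf2).symm
    have hfix : Sg * (Sp * Δᵀ) = Δᵀ := by
      have h := congrArg Matrix.transpose hΔ
      rw [Matrix.transpose_mul, Matrix.transpose_mul, hSpT, hSgT] at h
      rw [hcomm, Matrix.mul_assoc] at h
      exact h
    have hXD : Xᵀ * Δᵀ = Xᵀ * Cᵀ := by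
      rw [← Matrix.transpose_mul, hΔX, Matrix.transpose_mul]
    calc (C * X * G * Xᵀ * Sg) * Sp * Δᵀ
        = C * X * G * (Xᵀ * (Sg * (Sp * Δᵀ))) := by simp only [Matrix.mul_assoc]
    _ = C * X * G * (Xᵀ * Δᵀ) := by rw [hfix]
    _ = C * X * G * (Xᵀ * Cᵀ) := by rw [hXD]
    _ = C * X * G * Xᵀ * Cᵀ := by simp only [Matrix.mul_assoc]
  have part2 : (C * X * G * Xᵀ * Sg) * Sp * (C * X * G * Xᵀ * Sg)ᵀ
      = C * X * G * Xᵀ * Cᵀ := hcross _ part1a part1b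
  refine ⟨⟨part1a, part1b⟩, part2, ?_⟩
  intro Δ hf1 hf2
  have hK1 : (C * X * G * Xᵀ * Sg) * Sp * Δᵀ = C * X * G * Xᵀ * Cᵀ := hcross Δ hf1 hf2
  have hKT : (C * X * G * Xᵀ * Cᵀ)ᵀ = C * X * G * Xᵀ * Cᵀ := by
    simp [Matrix.transpose_mul, hGT, Matrix.mul_assoc]
  have hK3 : Δ * Sp * (C * X * G * Xᵀ * Sg)ᵀ = C * X * G * Xᵀ * Cᵀ := by
    have h := congrArg Matrix.transpose hK1
    rw [Matrix.transpose_mul, Matrix.transpose_mul, Matrix.transpose_transpose,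
      hSpT, hKT] at h
    rw [← Matrix.mul_assoc] at h
    exact h
  have hSpPSD : Sp.PosSemidef := by
    have h := hSg.mul_mul_conjTranspose_same Sp
    rw [Matrix.conjTranspose_eq_transpose_of_trivial, hSpT, hSp.2.1] at h
    exact h
  have hE : Δ * Sp * Δᵀ - C * X * G * Xᵀ * Cᵀ
      = (Δ - C * X * G * Xᵀ * Sg) * Sp * (Δ - C * X * G * Xᵀ * Sg)ᵀ := by
    rw [Matrix.transpose_sub, Matrix.sub_mul, Matrix.sub_mul, Matrix.mul_sub,
      Matrix.mul_sub, hK1, hK3, part2]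
    abel
  rw [hE]
  have h := hSpPSD.mul_mul_conjTranspose_same (Δ - C * X * G * Xᵀ * Sg)
  rwa [Matrix.conjTranspose_eq_transpose_of_trivial] at h
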